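/- Let E be a nested set of subsets of a set V (for all C, D ∈ E, one of C ⊆ D, C ⊆ D*, C* ⊆ D, C* ⊆ D* holds, where * denotes complement), closed under complementation, satisfying the finite interval condition: for C ⊆ D in E there are only finitely many E' ∈ E with C ⊆ E' ⊆ D. Suppose an abstract group H acts on V preserving E. If the quotient nested set also satisfies the finite interval condition and the preimage construction preserves nesting, then E is the directed edge set of a tree on which H acts. -/

import Mathlib

open scoped Pointwise

universe u v

namespace Dun18

variable {V : Type v}

/-- Hypotheses bundle. -/
structure Hyp (E : Set (Set V)) : Prop where
  prop : ∀ C ∈ E, C.Nonempty ∧ Cᶜ.Nonempty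
  nested : ∀ C ∈ E, ∀ D ∈ E, C ⊆ D ∨ C ⊆ Dᶜ ∨ Cᶜ ⊆ D ∨ Cᶜ ⊆ Dᶜ
  compl : ∀ C ∈ E, Cᶜ ∈ E
  fic : ∀ C ∈ E, ∀ D ∈ E, C ⊆ D → {E' | E' ∈ E ∧ C ⊆ E' ∧ E' ⊆ D}.Finite

variable {E : Set (Set V)}

abbrev Sig (E : Set (Set V)) := {C : Set V // C ∈ E}

/-- complement, as an operation on `Sig E`. -/
def cm (h : Hyp E) (B : Sig E) : Sig E := ⟨B.1ᶜ, h.compl _ B.2⟩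

@[simp] lemma cm_cm (h : Hyp E) (B : Sig E) : cm h (cm h B) = B := by
  simp [cm]

lemma no_sub_compl (h : Hyp E) {C : Set V} (hC : C ∈ E) (hs : C ⊆ Cᶜ) : False := by
  obtain ⟨x, hx⟩ := (h.prop C hC).1
  exact hs hx hx

lemma not_univ (h : Hyp E) {C D : Set V} (hD : D ∈ E) (h1 : C ⊆ D) (h2 : Cᶜ ⊆ D) : False := by
  obtain ⟨x, hx⟩ := (h.prop D hD).2
  by_cases hxC : x ∈ C
  · exact hx (h1 hxC)
  · exact hx (h2 hxC)

/-- The head-equivalence on directed edges. -/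
def Rel (E : Set (Set V)) (B B' : Sig E) : Prop :=
  B.1 = B'.1 ∨ (B.1ᶜ ⊆ B'.1 ∧ B.1ᶜ ≠ B'.1 ∧
    ∀ X ∈ E, B.1ᶜ ⊆ X → X ⊆ B'.1 → X = B.1ᶜ ∨ X = B'.1)

lemma rel_refl (B : Sig E) : Rel E B B := Or.inl rfl

lemma rel_symm (h : Hyp E) {B B' : Sig E} (hr : Rel E B B') : Rel E B' B := by
  rcases hr with heq | ⟨hsub, hne, hgap⟩
  · exact Or.inl heq.symm
  · refine Or.inr ⟨?_, ?_, ?_⟩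
    · exact Set.compl_subset_comm.mpr hsub
    · intro hEq
      apply hne
      rw [← compl_compl B'.1, hEq]
    · intro X hX h1 h2
      have hXc := h.compl X hX
      have h1' : B.1ᶜ ⊆ Xᶜ := by
        rw [Set.compl_subset_compl]
        simpa using h2
      have h2' : Xᶜ ⊆ B'.1 := by
        rw [Set.compl_subset_comm] at h1
        simpa using h1
      rcases hgap Xᶜ hXc h1' h2' with hh | hh
      · right
        rw [← compl_compl X, hh, compl_compl]
      · left
        rw [← compl_compl X, hh]

lemma rel_trans (h : Hyp E) {X Y Z : Sig E} (h1 : Rel E X Y) (h2 : Rel E Y Z) : Rel E X Z := by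
  rcases h1 with heq | ⟨hs1, hn1, hg1⟩
  · have : X = Y := Subtype.ext heq
    rwa [this]
  rcases h2 with heq | ⟨hs2, hn2, hg2⟩
  · have hYZ : Y = Z := Subtype.ext heq
    rw [← hYZ]
    exact Or.inr ⟨hs1, hn1, hg1⟩
  by_cases hXZ : X.1 = Z.1
  · exact Or.inl hXZ
  rcases h.nested X.1ᶜ (h.compl _ X.2) Z.1 Z.2 with hc | hc | hc | hc
  · -- main case : X.1ᶜ ⊆ Z.1
    refine Or.inr ⟨hc, ?_, ?_⟩
    · intro hEq
      -- Z.1 = X.1ᶜ : then Y.1ᶜ ⊆ Z.1 = X.1ᶜ so X.1 ⊆ Y.1; and X.1ᶜ ⊆ Y.1 : univ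
      have hXY : X.1 ⊆ Y.1 := by
        have : Y.1ᶜ ⊆ X.1ᶜ := hEq ▸ hs2
        rwa [Set.compl_subset_compl] at this
      exact not_univ h Y.2 hXY hs1
    · intro G hG hG1 hG2
      rcases h.nested G hG Y.1 Y.2 with hd | hd | hd | hd
      · rcases hg1 G hG hG1 hd with hh | hh
        · exact Or.inl hh
        · exfalso
          exact not_univ h Z.2 (hh ▸ hG2) hs2
      · exfalso
        have : Y.1 ⊆ X.1 := by
          have : X.1ᶜ ⊆ Y.1ᶜ := hG1.trans hd
          rwa [Set.compl_subset_compl] at this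
        exact no_sub_compl h (h.compl _ X.2) (by simpa using hs1.trans this)
      · -- Gᶜ ⊆ Y.1, i.e. Y.1ᶜ ⊆ G
        have hYG : Y.1ᶜ ⊆ G := by
          rw [Set.compl_subset_comm] at hd
          simpa using hd
        rcases hg2 G hG hYG hG2 with hh | hh
        · exfalso
          have : Y.1 ⊆ X.1 := by
            have : X.1ᶜ ⊆ Y.1ᶜ := hh ▸ hG1
            rwa [Set.compl_subset_compl] at this
          exact no_sub_compl h (h.compl _ X.2) (by simpa using hs1.trans this)
        · exact Or.inr hh
      · -- Gᶜ ⊆ Y.1ᶜ, i.e. Y.1 ⊆ G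
        exfalso
        have hYG : Y.1 ⊆ G := by
          rw [Set.compl_subset_compl] at hd
          exact hd
        exact not_univ h Z.2 (hYG.trans hG2) hs2
  · -- X.1ᶜ ⊆ Z.1ᶜ
    exfalso
    have hZc1 : X.1ᶜ ⊆ Z.1ᶜ := hc
    have hZc2 : Z.1ᶜ ⊆ Y.1 := by
      rw [Set.compl_subset_comm] at hs2
      simpa using hs2
    rcases hg1 Z.1ᶜ (h.compl _ Z.2) hZc1 hZc2 with hh | hh
    · exact hXZ (compl_injective hh).symm
    · exact hn2 (by rw [← hh, compl_compl])
  · -- X.1ᶜᶜ ⊆ Z.1 i.e. X.1 ⊆ Z.1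
    exfalso
    have hXsub : X.1 ⊆ Z.1 := by simpa using hc
    have hYX : Y.1ᶜ ⊆ X.1 := by
      rw [Set.compl_subset_comm] at hs1
      simpa using hs1
    rcases hg2 X.1 X.2 hYX hXsub with hh | hh
    · exact hn1 (by rw [hh, compl_compl])
    · exact hXZ hh
  · -- X.1ᶜᶜ ⊆ Z.1ᶜ i.e. Z.1 ⊆ X.1ᶜ
    exfalso
    have hZX : Z.1 ⊆ X.1ᶜ := by
      rw [Set.subset_compl_comm]
      simpa using hc
    have hXY : X.1 ⊆ Y.1 := by
      have : Y.1ᶜ ⊆ X.1ᶜ := hs2.trans hZX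
      rwa [Set.compl_subset_compl] at this
    exact not_univ h Y.2 hXY hs1

/-- The setoid on (ulifted) directed edges. -/
def st (h : Hyp E) : Setoid (ULift.{u} (Sig E)) :=
  ⟨fun a b => Rel E a.down b.down,
   ⟨fun _ => rel_refl _, fun ha => rel_symm h ha, fun ha hb => rel_trans h ha hb⟩⟩

/-- vertex set -/
def W (h : Hyp E) : Type (max u v) := Quotient (st.{u} h)

/-- vertex of a directed edge (its head). -/
def vtx (h : Hyp E) (B : Sig E) : W.{u} h := Quotient.mk (st h) (ULift.up B)

lemma vtx_eq_iff (h : Hyp E) {B D : Sig E} : vtx.{u} h B = vtx h D ↔ Rel E B D :=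
  Quotient.eq (r := st h)

/-- The tree. -/
def T (h : Hyp E) : SimpleGraph (W.{u} h) where
  Adj x y := x ≠ y ∧ ∃ B : Sig E, vtx h B = x ∧ vtx h (cm h B) = y
  symm := by
    constructor
    rintro x y ⟨hne, B, hB, hB'⟩
    exact ⟨hne.symm, cm h B, hB', by rw [cm_cm]; exact hB⟩
  loopless := by
    constructor
    rintro x ⟨hne, _⟩
    exact hne rfl

lemma not_rel_compl (h : Hyp E) (B : Sig E) : ¬ Rel E B (cm h B) := by
  rintro (heq | ⟨hsub, hne, -⟩)
  · exact no_sub_compl h B.2 (le_of_eq heq)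
  · exact hne rfl

lemma adj_compl (h : Hyp E) (B : Sig E) : (T.{u} h).Adj (vtx h B) (vtx h (cm h B)) := by
  refine ⟨?_, B, rfl, rfl⟩
  rw [Ne, vtx_eq_iff]
  exact not_rel_compl h B

lemma dart_inj (h : Hyp E) {B D : Sig E} (h1 : vtx.{u} h B = vtx h D)
    (h2 : vtx.{u} h (cm h B) = vtx h (cm h D)) : B = D := by
  rw [vtx_eq_iff] at h1 h2
  rcases h1 with heq | ⟨hs1, hn1, -⟩
  · exact Subtype.ext heq
  rcases h2 with heq | ⟨hs2, hn2, -⟩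
  · simp only [cm] at heq
    exact Subtype.ext (compl_injective heq)
  · exfalso
    -- hs2 : B.1ᶜᶜ ⊆ D.1ᶜ, i.e. B.1 ⊆ D.1ᶜ, i.e. D.1 ⊆ B.1ᶜ
    have hDB : D.1 ⊆ B.1ᶜ := by
      rw [Set.subset_compl_comm]
      simpa [cm] using hs2
    exact hn1 (le_antisymm hs1 hDB)


/-- interval -/
def Ival (E : Set (Set V)) (B D : Set V) : Set (Set V) := {X | X ∈ E ∧ B ⊆ X ∧ X ⊆ D}

lemma reach_of_subset (h : Hyp E) : ∀ n : ℕ, ∀ B D : Sig E, B.1 ⊆ D.1 →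
    (Ival E B.1 D.1).ncard = n → (T.{u} h).Reachable (vtx h B) (vtx h D) := by
  intro n
  induction n using Nat.strong_induction_on with
  | _ n ih =>
  intro B D hBD hcard
  by_cases hEq : B.1 = D.1
  · rw [show vtx.{u} h B = vtx h D from (vtx_eq_iff h).mpr (Or.inl hEq)]
  · have hfin : (Ival E B.1 D.1).Finite := h.fic _ B.2 _ D.2 hBD
    have hJfin : ({X ∈ Ival E B.1 D.1 | X ≠ B.1}).Finite := hfin.subset (Set.sep_subset _ _)
    have hJne : ({X ∈ Ival E B.1 D.1 | X ≠ B.1}).Nonempty :=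
      ⟨D.1, ⟨D.2, hBD, subset_rfl⟩, fun hh => hEq hh.symm⟩
    obtain ⟨M, hM, hMmin⟩ := hJfin.toFinset.exists_minimal
      (by rwa [Set.Finite.toFinset_nonempty])
    rw [Set.Finite.mem_toFinset] at hM
    obtain ⟨⟨hME, hBM, hMD⟩, hMne⟩ := hM
    have hgap : ∀ X ∈ E, B.1 ⊆ X → X ⊆ M → X = B.1 ∨ X = M := by
      intro X hX h1 h2
      by_cases hXB : X = B.1
      · exact Or.inl hXB
      · right
        have hXJ : X ∈ hJfin.toFinset := by
          rw [Set.Finite.mem_toFinset]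
          exact ⟨⟨hX, h1, h2.trans hMD⟩, hXB⟩
        have hnlt : ¬ X < M := fun hlt => hlt.2 (hMmin hXJ hlt.1)
        by_contra hc
        exact hnlt (lt_of_le_of_ne h2 hc)
    have hrel : Rel E (cm h B) ⟨M, hME⟩ := by
      refine Or.inr ⟨?_, ?_, ?_⟩
      · simpa [cm] using hBM
      · simp only [cm, compl_compl]
        exact fun hh => hMne hh.symm
      · intro X hX h1 h2
        simp only [cm, compl_compl] at h1 ⊢
        exact hgap X hX h1 h2
    have hstep : (T.{u} h).Adj (vtx h B) (vtx h ⟨M, hME⟩) := by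
      have h0 := adj_compl.{u} h B
      rwa [show vtx.{u} h (cm h B) = vtx h ⟨M, hME⟩ from (vtx_eq_iff h).mpr hrel] at h0
    have hsubI : Ival E M D.1 ⊆ Ival E B.1 D.1 :=
      fun X hX => ⟨hX.1, hBM.trans hX.2.1, hX.2.2⟩
    have hBnotin : B.1 ∉ Ival E M D.1 := fun hx => hMne (le_antisymm hx.2.1 hBM)
    have hlt : (Ival E M D.1).ncard < n := by
      rw [← hcard]
      exact Set.ncard_lt_ncard
        ⟨hsubI, fun hc => hBnotin (hc ⟨B.2, subset_rfl, hBD⟩)⟩ hfin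
    exact (hstep.reachable).trans (ih _ hlt ⟨M, hME⟩ D hMD rfl)

lemma reach_all (h : Hyp E) (B D : Sig E) : (T.{u} h).Reachable (vtx h B) (vtx h D) := by
  have key : ∀ B D : Sig E, B.1 ⊆ D.1 → (T.{u} h).Reachable (vtx h B) (vtx h D) :=
    fun B D hBD => reach_of_subset h _ B D hBD rfl
  rcases h.nested B.1 B.2 D.1 D.2 with hc | hc | hc | hc
  · exact key B D hc
  · exact (key B (cm h D) hc).trans (adj_compl h D).symm.reachable
  · exact (adj_compl h B).reachable.trans (key (cm h B) D hc)
  · exact ((adj_compl h B).reachable.trans (key (cm h B) (cm h D) hc)).trans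
      (adj_compl h D).symm.reachable

lemma conn (h : Hyp E) (hne : E.Nonempty) : (T.{u} h).Connected := by
  haveI : Nonempty (W.{u} h) := ⟨vtx h ⟨hne.choose, hne.choose_spec⟩⟩
  refine ⟨fun x y => ?_⟩
  induction x using Quotient.inductionOn with | _ a =>
  induction y using Quotient.inductionOn with | _ b =>
  exact reach_all h a.down b.down


/-- Side predicate: head of `X` lies on the head side of `C`. -/
def P (C : Set V) (X : Sig E) : Prop := X.1 ⊆ C ∨ (Cᶜ ⊆ X.1 ∧ Cᶜ ≠ X.1)

lemma two_sub_empty (h : Hyp E) {D C : Set V} (hD : D ∈ E) (a : D ⊆ C) (b : D ⊆ Cᶜ) :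
    False := by
  obtain ⟨x, hx⟩ := (h.prop D hD).1
  exact (b hx) (a hx)

lemma P_mono (h : Hyp E) {C : Set V} (hC : C ∈ E) {X Y : Sig E} (hr : Rel E X Y)
    (hP : P C X) : P C Y := by
  rcases hr with heq | ⟨hsub, hne, hgap⟩
  · have : X = Y := Subtype.ext heq
    rwa [← this]
  rcases hP with hXC | ⟨hCX, hCne⟩
  · rcases h.nested Y.1 Y.2 C hC with hd | hd | hd | hd
    · exact Or.inl hd
    · exfalso
      have hCXs : C ⊆ X.1 := by
        have : X.1ᶜ ⊆ Cᶜ := hsub.trans hd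
        rwa [Set.compl_subset_compl] at this
      have hXeq : X.1 = C := le_antisymm hXC hCXs
      exact hne (le_antisymm hsub (by rw [hXeq]; exact hd))
    · refine Or.inr ⟨?_, ?_⟩
      · rw [Set.compl_subset_comm] at hd
        simpa using hd
      · intro hEq
        have hCXs : C ⊆ X.1 := by
          have : X.1ᶜ ⊆ Cᶜ := hEq ▸ hsub
          rwa [Set.compl_subset_compl] at this
        have hXeq : X.1 = C := le_antisymm hXC hCXs
        exact hne (by rw [hXeq, hEq])
    · -- C ⊆ Y.1
      have hCY : C ⊆ Y.1 := by rwa [Set.compl_subset_compl] at hd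
      refine Or.inr ⟨(Set.compl_subset_compl.mpr hXC).trans hsub, ?_⟩
      intro hEq
      exact no_sub_compl h hC (hEq ▸ hCY)
  · have hXcC : X.1ᶜ ⊆ C := by
      rw [Set.compl_subset_comm] at hCX
      simpa using hCX
    rcases h.nested Y.1 Y.2 C hC with hd | hd | hd | hd
    · exact Or.inl hd
    · exfalso
      exact no_sub_compl h (h.compl _ X.2) (by simpa using hsub.trans (hd.trans hCX))
    · refine Or.inr ⟨?_, ?_⟩
      · rw [Set.compl_subset_comm] at hd
        simpa using hd
      · intro hEq
        have hCXs : C ⊆ X.1 := by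
          have : X.1ᶜ ⊆ Cᶜ := hEq ▸ hsub
          rwa [Set.compl_subset_compl] at this
        exact not_univ h X.2 hCXs hCX
    · have hCY : C ⊆ Y.1 := by rwa [Set.compl_subset_compl] at hd
      rcases hgap C hC hXcC hCY with hh | hh
      · exact absurd (by rw [hh, compl_compl]) hCne
      · exact Or.inl (le_of_eq hh.symm)

/-- The side function on vertices. -/
def Pbar (h : Hyp E) (C : Set V) (hC : C ∈ E) : W.{u} h → Prop :=
  Quotient.lift (fun x => P C x.down)
    (fun _ _ hab => propext ⟨P_mono h hC hab, P_mono h hC (rel_symm h hab)⟩)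

lemma P_cross (h : Hyp E) {C : Set V} (hC : C ∈ E) (D : Sig E) (h1 : D.1 ≠ C)
    (h2 : D.1 ≠ Cᶜ) : (P C D ↔ P C (cm h D)) := by
  rcases h.nested D.1 D.2 C hC with hd | hd | hd | hd
  · refine iff_of_true (Or.inl hd) (Or.inr ⟨Set.compl_subset_compl.mpr hd, ?_⟩)
    intro hEq
    exact h1 (compl_injective hEq).symm
  · refine iff_of_false ?_ ?_
    · rintro (hsub | ⟨hsub, hne⟩)
      · exact two_sub_empty h D.2 hsub hd
      · exact hne (le_antisymm hsub hd)
    · rintro (hsub | ⟨hsub, hne⟩)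
      · -- hsub : D.1ᶜ ⊆ C; hd : D.1 ⊆ Cᶜ gives C ⊆ D.1ᶜ
        have hCD : C ⊆ D.1ᶜ := Set.subset_compl_comm.mp hd
        simp only [cm] at hsub
        have heq : D.1ᶜ = C := le_antisymm hsub hCD
        exact h2 (by rw [← heq, compl_compl])
      · have : D.1 ⊆ C := by
          have := hsub
          simp only [cm] at this
          rwa [Set.compl_subset_compl] at this
        exact two_sub_empty h D.2 this hd
  · refine iff_of_true (Or.inr ⟨?_, fun hEq => h2 hEq.symm⟩) (Or.inl hd)
    rw [Set.compl_subset_comm] at hd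
    simpa using hd
  · have hCD : C ⊆ D.1 := by rwa [Set.compl_subset_compl] at hd
    refine iff_of_false ?_ ?_
    · rintro (hsub | ⟨hsub, hne⟩)
      · exact h1 (le_antisymm hsub hCD)
      · exact not_univ h D.2 hCD hsub
    · rintro (hsub | ⟨hsub, hne⟩)
      · exact two_sub_empty h (h.compl _ D.2) hsub hd
      · have : D.1 ⊆ C := by
          simp only [cm] at hsub
          rwa [Set.compl_subset_compl] at hsub
        exact h1 (le_antisymm this hCD)

lemma acyclic (h : Hyp E) : (T.{u} h).IsAcyclic := by
  rw [SimpleGraph.isAcyclic_iff_forall_adj_isBridge]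
  intro v w hadj
  rw [SimpleGraph.isBridge_iff]
  obtain ⟨hvw_ne, B, hv, hw⟩ := hadj
  intro hreach
  have hC : B.1 ∈ E := B.2
  have inv : ∀ a b : W.{u} h,
      ((T.{u} h) \ SimpleGraph.fromEdgeSet {s(v, w)}).Adj a b →
      (Pbar h B.1 hC a ↔ Pbar h B.1 hC b) := by
    rintro a b ⟨⟨hab_ne, D, ha, hb⟩, hnot⟩
    by_cases hDC : D.1 = B.1
    · exfalso
      apply hnot
      have hDB : D = B := Subtype.ext hDC
      rw [SimpleGraph.fromEdgeSet_adj]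
      subst hDB
      rw [← hv, ha, ← hw, hb]
      exact ⟨rfl, hab_ne⟩
    by_cases hDC' : D.1 = B.1ᶜ
    · exfalso
      apply hnot
      have hDB : D = cm h B := Subtype.ext hDC'
      rw [SimpleGraph.fromEdgeSet_adj]
      subst hDB
      rw [cm_cm] at hb
      have ha' : a = w := ha.symm.trans hw
      have hb' : b = v := hb.symm.trans hv
      subst ha'
      subst hb'
      exact ⟨by rw [Set.mem_singleton_iff]; exact Sym2.eq_swap, hab_ne⟩
    · rw [← ha, ← hb]
      exact P_cross h hC D hDC hDC'
  have key : ∀ {a b : W.{u} h}, ((T.{u} h) \ SimpleGraph.fromEdgeSet {s(v, w)}).Walk a b →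
      (Pbar h B.1 hC a ↔ Pbar h B.1 hC b) := by
    intro a b p
    induction p with
    | nil => exact Iff.rfl
    | cons hadj p ih => exact (inv _ _ hadj).trans ih
  obtain ⟨p⟩ := hreach
  have hiff := key p
  have h1 : Pbar h B.1 hC v := by
    rw [← hv]
    exact Or.inl subset_rfl
  have h2 : ¬ Pbar h B.1 hC w := by
    rw [← hw]
    rintro (hsub | ⟨-, hne⟩)
    · exact no_sub_compl h (h.compl _ hC) (by simpa [cm] using hsub)
    · exact hne rfl
  exact h2 (hiff.mp h1)

lemma isTree (h : Hyp E) (hne : E.Nonempty) : (T.{u} h).IsTree :=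
  ⟨conn h hne, acyclic h⟩


section Action

variable {H : Type u} [Group H] [MulAction H V]

/-- action on directed edges. -/
noncomputable def act (hHE : ∀ (g : H), ∀ C ∈ E, g • C ∈ E) (g : H) (B : Sig E) : Sig E :=
  ⟨g • B.1, hHE g B.1 B.2⟩

lemma act_compl (h : Hyp E) (hHE : ∀ (g : H), ∀ C ∈ E, g • C ∈ E) (g : H) (B : Sig E) :
    act hHE g (cm h B) = cm h (act hHE g B) :=
  Subtype.ext (by simp [act, cm, Set.smul_set_compl])

lemma rel_act (h : Hyp E) (hHE : ∀ (g : H), ∀ C ∈ E, g • C ∈ E) (g : H) {X Y : Sig E}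
    (hr : Rel E X Y) : Rel E (act hHE g X) (act hHE g Y) := by
  rcases hr with heq | ⟨hsub, hne, hgap⟩
  · exact Or.inl (by simp only [act]; rw [heq])
  · refine Or.inr ⟨?_, ?_, ?_⟩
    · show (g • X.1)ᶜ ⊆ g • Y.1
      rw [← Set.smul_set_compl]
      exact Set.smul_set_mono hsub
    · intro hEq
      apply hne
      rw [show (act hHE g X).1ᶜ = g • X.1ᶜ from (Set.smul_set_compl).symm] at hEq
      have := congrArg (fun s => g⁻¹ • s) hEq
      have hY : (act hHE g Y).1 = g • Y.1 := rfl
      rw [hY] at this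
      simpa [inv_smul_smul] using this
    · intro G hG h1 h2
      rw [show (act hHE g X).1ᶜ = g • X.1ᶜ from (Set.smul_set_compl).symm] at h1 ⊢
      have h1' : X.1ᶜ ⊆ g⁻¹ • G := by
        have := Set.smul_set_mono (a := g⁻¹) h1
        rwa [inv_smul_smul] at this
      have h2' : g⁻¹ • G ⊆ Y.1 := by
        have h2b : G ⊆ g • Y.1 := h2
        have := Set.smul_set_mono (a := g⁻¹) h2b
        rwa [inv_smul_smul] at this
      rcases hgap (g⁻¹ • G) (hHE g⁻¹ G hG) h1' h2' with hh | hh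
      · left
        have := congrArg (fun s => g • s) hh
        simpa [smul_inv_smul] using this
      · right
        show G = g • Y.1
        have := congrArg (fun s => g • s) hh
        simpa [smul_inv_smul] using this

/-- action on vertices. -/
noncomputable def sm (h : Hyp E) (hHE : ∀ (g : H), ∀ C ∈ E, g • C ∈ E) (g : H) : W.{u} h → W.{u} h :=
  Quotient.map (fun x => ULift.up (act hHE g x.down)) (fun _ _ hab => rel_act h hHE g hab)

lemma sm_vtx (h : Hyp E) (hHE : ∀ (g : H), ∀ C ∈ E, g • C ∈ E) (g : H) (B : Sig E) :
    sm h hHE g (vtx h B) = vtx h (act hHE g B) := rfl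

lemma sm_one (h : Hyp E) (hHE : ∀ (g : H), ∀ C ∈ E, g • C ∈ E) (w : W.{u} h) :
    sm h hHE 1 w = w := by
  induction w using Quotient.inductionOn with | _ a =>
  show Quotient.mk (st h) (ULift.up (act hHE 1 a.down)) = Quotient.mk (st h) a
  have : act hHE (1 : H) a.down = a.down := Subtype.ext (one_smul _ _)
  rw [this]

lemma sm_mul (h : Hyp E) (hHE : ∀ (g : H), ∀ C ∈ E, g • C ∈ E) (g g' : H) (w : W.{u} h) :
    sm h hHE (g * g') w = sm h hHE g (sm h hHE g' w) := by
  induction w using Quotient.inductionOn with | _ a =>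
  show Quotient.mk (st h) (ULift.up (act hHE (g * g') a.down)) =
    Quotient.mk (st h) (ULift.up (act hHE g (act hHE g' a.down)))
  have : act hHE (g * g') a.down = act hHE g (act hHE g' a.down) :=
    Subtype.ext (mul_smul _ _ _)
  rw [this]

lemma sm_cancel (h : Hyp E) (hHE : ∀ (g : H), ∀ C ∈ E, g • C ∈ E) (g : H) (w : W.{u} h) :
    sm h hHE g⁻¹ (sm h hHE g w) = w := by
  rw [← sm_mul, inv_mul_cancel, sm_one]

lemma sm_adj (h : Hyp E) (hHE : ∀ (g : H), ∀ C ∈ E, g • C ∈ E) (g : H) {x y : W.{u} h}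
    (ha : (T.{u} h).Adj x y) : (T.{u} h).Adj (sm h hHE g x) (sm h hHE g y) := by
  obtain ⟨hne, D, hD, hD'⟩ := ha
  refine ⟨?_, act hHE g D, ?_, ?_⟩
  · intro hEq
    apply hne
    rw [← sm_cancel h hHE g x, hEq, sm_cancel]
  · rw [← hD, sm_vtx]
  · rw [← hD', sm_vtx, act_compl]

end Action

end Dun18

/-- Dunwoody's tree construction: a nested set `E` of subsets of `V`, closed under
complementation, satisfying the finite interval condition, and preserved by an action
of a group `H` on `V` (with the quotient nested set also satisfying the finite
interval condition and the preimage construction preserving nesting), is the directed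
edge set of a tree on which `H` acts: there is a tree `T` and an `H`-action on it,
together with an `H`-equivariant bijection from `E` to the darts of `T` carrying
complementation to dart reversal. -/
theorem stmt_18 {H : Type u} {V : Type v} [Group H] [MulAction H V]
    (E : Set (Set V))
    (hprop : ∀ C ∈ E, C.Nonempty ∧ Cᶜ.Nonempty)
    (hnested : ∀ C ∈ E, ∀ D ∈ E, C ⊆ D ∨ C ⊆ Dᶜ ∨ Cᶜ ⊆ D ∨ Cᶜ ⊆ Dᶜ)
    (hcompl : ∀ C ∈ E, Cᶜ ∈ E)
    (hfic : ∀ C ∈ E, ∀ D ∈ E, C ⊆ D → {E' | E' ∈ E ∧ C ⊆ E' ∧ E' ⊆ D}.Finite)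
    (hHE : ∀ (h : H), ∀ C ∈ E, h • C ∈ E)
    (hqfic : ∀ C ∈ E, ∀ D ∈ E, C ⊆ D →
      {O : Set (Set V) | ∃ E' ∈ E, C ⊆ E' ∧ E' ⊆ D ∧ O = MulAction.orbit H E'}.Finite)
    (hpre : ∀ (h : H), ∀ C ∈ E, ∀ D ∈ E,
      h • C ⊆ D ∨ h • C ⊆ Dᶜ ∨ (h • C)ᶜ ⊆ D ∨ (h • C)ᶜ ⊆ Dᶜ) :
    ∃ (W : Type (max u v)) (T : SimpleGraph W), T.IsTree ∧
      ∃ sm : H → W → W,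
        (∀ w, sm 1 w = w) ∧ (∀ h h' w, sm (h * h') w = sm h (sm h' w)) ∧
        (∀ (h : H) (w w' : W), T.Adj w w' → T.Adj (sm h w) (sm h w')) ∧
        ∃ φ : {C : Set V // C ∈ E} ≃ T.Dart,
          (∀ C D : {C : Set V // C ∈ E}, (D : Set V) = (C : Set V)ᶜ →
            φ D = (φ C).symm) ∧
          (∀ (h : H) (C D : {C : Set V // C ∈ E}), (D : Set V) = h • (C : Set V) →
            (φ D).fst = sm h ((φ C).fst) ∧ (φ D).snd = sm h ((φ C).snd)) := by
  classical
  rcases Set.eq_empty_or_nonempty E with rfl | hEne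
  · -- degenerate case : no edges, single-vertex tree
    haveI hsig : IsEmpty {C : Set V // C ∈ (∅ : Set (Set V))} :=
      ⟨fun C => Set.notMem_empty _ C.2⟩
    haveI hdart : IsEmpty ((⊥ : SimpleGraph PUnit.{max u v + 1}).Dart) :=
      ⟨fun d => d.adj⟩
    refine ⟨PUnit.{max u v + 1}, ⊥, ⟨⟨fun a b => by
      cases a; cases b; exact SimpleGraph.Reachable.refl _⟩,
      SimpleGraph.isAcyclic_bot⟩, fun _ w => w, fun _ => rfl, fun _ _ _ => rfl,
      fun _ _ _ ha => ha, Equiv.equivOfIsEmpty _ _, fun C => isEmptyElim C,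
      fun _ C => isEmptyElim C⟩
  · have h : Dun18.Hyp E := ⟨hprop, hnested, hcompl, hfic⟩
    refine ⟨Dun18.W.{u} h, Dun18.T.{u} h, Dun18.isTree h hEne, Dun18.sm h hHE,
      Dun18.sm_one h hHE, Dun18.sm_mul h hHE, fun g x y ha => Dun18.sm_adj h hHE g ha, ?_⟩
    have hbij : Function.Bijective
        (fun B : Dun18.Sig E =>
          (⟨(Dun18.vtx.{u} h B, Dun18.vtx h (Dun18.cm h B)),
            Dun18.adj_compl h B⟩ : (Dun18.T.{u} h).Dart)) := by
      constructor
      · intro B D hEq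
        have h1 := congrArg (fun d => (SimpleGraph.Dart.toProd d).1) hEq
        have h2 := congrArg (fun d => (SimpleGraph.Dart.toProd d).2) hEq
        exact Dun18.dart_inj h h1 h2
      · intro d
        obtain ⟨hne', D, hD, hD'⟩ := d.adj
        refine ⟨D, SimpleGraph.Dart.ext _ _ ?_⟩
        exact Prod.ext hD hD'
    refine ⟨Equiv.ofBijective _ hbij, ?_, ?_⟩
    · intro C D hDC
      have hD : D = Dun18.cm h C := Subtype.ext hDC
      subst hD
      apply SimpleGraph.Dart.ext
      show (Dun18.vtx.{u} h (Dun18.cm h C), Dun18.vtx h (Dun18.cm h (Dun18.cm h C))) = _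
      rw [Dun18.cm_cm]
      rfl
    · intro g C D hD
      have hD' : D = Dun18.act hHE g C := Subtype.ext hD
      subst hD'
      constructor
      · show Dun18.vtx.{u} h (Dun18.act hHE g C) = Dun18.sm h hHE g (Dun18.vtx h C)
        rw [Dun18.sm_vtx]
      · show Dun18.vtx.{u} h (Dun18.cm h (Dun18.act hHE g C)) =
          Dun18.sm h hHE g (Dun18.vtx h (Dun18.cm h C))
        rw [Dun18.sm_vtx, Dun18.act_compl]
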